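/- For all integers q ≥ 2 and n ≥ 1, and under each of the scenarios (∗∗), (∗•), (••), the family 𝓝_q is n-cell implementable if and only if q ≤ 2n. -/

import Mathlib

/-- The alphabet 𝔹• = {0, 1, ∗, •}. -/
inductive BB : Type
  | zero
  | one
  | star
  | reject
deriving DecidableEq

instance : Fintype BB :=
  ⟨{BB.zero, BB.one, BB.star, BB.reject}, fun x => by cases x <;> decide⟩

/-- The cell function T : 𝔹• × 𝔹• → 𝔹: T(u,ϑ) = 1 iff u = ∗, or ϑ = ∗,
or u,ϑ ∈ 𝔹 with u = ϑ. -/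
def Tcell : BB → BB → Bool
  | BB.star, _ => true
  | _, BB.star => true
  | BB.zero, BB.zero => true
  | BB.one, BB.one => true
  | _, _ => false

/-- The word-level function T(u,ϑ) = ⋀_{j<n} T(u_j, ϑ_j). -/
def Tword {n : ℕ} (u θ : Fin n → BB) : Bool :=
  decide (∀ j, Tcell (u j) (θ j) = true)

/-- The alphabet 𝔹 = {0,1} ⊆ 𝔹•. -/
def Bcirc : Set BB := {BB.zero, BB.one}

/-- The alphabet 𝔹∗ = {0,1,∗} ⊆ 𝔹•. -/
def Bstar : Set BB := {BB.zero, BB.one, BB.star}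

/-- The full alphabet 𝔹•. -/
def Bdot : Set BB := Set.univ

/-- A family Φ of functions {0,…,q−1} → 𝔹 is n-cell implementable under
scenario (A,B) if there are mappings u : {0,…,q−1} → A^n and ϑ : Φ → B^n
with f(x) = T(u(x), ϑ(f)) for all f ∈ Φ and x. -/
def Implementable (A B : Set BB) (n q : ℕ) (Φ : Set (Fin q → Bool)) : Prop :=
  ∃ u : Fin q → Fin n → BB, ∃ θ : (Fin q → Bool) → Fin n → BB,
    (∀ x j, u x j ∈ A) ∧ (∀ f ∈ Φ, ∀ j, θ f j ∈ B) ∧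
    (∀ f ∈ Φ, ∀ x, f x = Tword (u x) (θ f))

/-- The family 𝓔_q = { x ↦ [x = t] : t ∈ [q⟩ }. -/
def Eset (q : ℕ) : Set (Fin q → Bool) :=
  { f | ∃ t : Fin q, f = fun x => decide (x = t) }

/-- The family 𝓝_q = { x ↦ [x ≠ t] : t ∈ [q⟩ }. -/
def Nset (q : ℕ) : Set (Fin q → Bool) :=
  { f | ∃ t : Fin q, f = fun x => decide (x ≠ t) }

/-- The family 𝓖_q = { x ↦ [x ≥ t] : t ∈ [q⟩ }. -/
def Gset (q : ℕ) : Set (Fin q → Bool) :=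
  { f | ∃ t : Fin q, f = fun x => decide (t ≤ x) }

/-- The family 𝓛_q = { x ↦ [x ≤ t] : t ∈ [q⟩ }. -/
def Lset (q : ℕ) : Set (Fin q → Bool) :=
  { f | ∃ t : Fin q, f = fun x => decide (x ≤ t) }

/-! Auxiliary material -/

lemma Tcell_star_right (a : BB) : Tcell a BB.star = true := by cases a <;> rfl

lemma Implementable.mono {A A' B B' : Set BB} (hA : A ⊆ A') (hB : B ⊆ B')
    {n q : ℕ} {Φ : Set (Fin q → Bool)}
    (h : Implementable A B n q Φ) : Implementable A' B' n q Φ := by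
  obtain ⟨u, θ, h1, h2, h3⟩ := h
  exact ⟨u, θ, fun x j => hA (h1 x j), fun f hf j => hB (h2 f hf j), h3⟩

/-- bit encoding -/
def bitc (m : ℕ) : BB := if m % 2 = 0 then BB.zero else BB.one

/-- complementary bit encoding -/
def cobitc (m : ℕ) : BB := if m % 2 = 0 then BB.one else BB.zero

lemma Tcell_star_left (v : BB) : Tcell BB.star v = true := by cases v <;> rfl

lemma bit_cell (a b : ℕ) : Tcell (bitc a) (cobitc b) = true ↔ a % 2 ≠ b % 2 := by
  unfold bitc cobitc
  rcases Nat.mod_two_eq_zero_or_one a with ha | ha <;>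
    rcases Nat.mod_two_eq_zero_or_one b with hb | hb <;>
      simp [ha, hb, Tcell]

lemma key (q n : ℕ) (hqn : q ≤ 2 * n) (x t : Fin q) :
    (x ≠ t ↔ ∀ j : Fin n,
      Tcell (if (j : ℕ) = (x : ℕ) / 2 then bitc (x : ℕ) else BB.star)
        (if (j : ℕ) = (t : ℕ) / 2 then cobitc (t : ℕ) else BB.star) = true) := by
  have hx2 : (x : ℕ) / 2 < n := by have := x.isLt; omega
  have hne : x ≠ t ↔ (x : ℕ) ≠ (t : ℕ) := by
    constructor
    · intro h he; exact h (Fin.ext he)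
    · intro h he; exact h (congrArg Fin.val he)
  by_cases hsame : (x : ℕ) / 2 = (t : ℕ) / 2
  · have hj0 : ∀ j : Fin n, (j : ℕ) = (x : ℕ) / 2 →
        ((∀ j : Fin n,
          Tcell (if (j : ℕ) = (x : ℕ) / 2 then bitc (x : ℕ) else BB.star)
            (if (j : ℕ) = (t : ℕ) / 2 then cobitc (t : ℕ) else BB.star) = true) ↔
          Tcell (bitc (x : ℕ)) (cobitc (t : ℕ)) = true) := by
      intro j0 hj0
      constructor
      · intro h
        have := h j0
        rwa [if_pos hj0, if_pos (hsame ▸ hj0)] at this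
      · intro h j
        by_cases h1 : (j : ℕ) = (x : ℕ) / 2
        · rwa [if_pos h1, if_pos (hsame ▸ h1)]
        · rw [if_neg h1]; exact Tcell_star_left _
    rw [hj0 ⟨(x : ℕ) / 2, hx2⟩ rfl, bit_cell, hne]
    omega
  · constructor
    · intro _ j
      by_cases h1 : (j : ℕ) = (x : ℕ) / 2
      · rw [if_pos h1, if_neg (by omega)]
        exact Tcell_star_right _
      · rw [if_neg h1]; exact Tcell_star_left _
    · intro _
      rw [hne]; omega

lemma Nset_upper (q n : ℕ) (hqn : q ≤ 2 * n) :
    Implementable Bstar Bstar n q (Nset q) := by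
  classical
  refine ⟨fun x j => if (j : ℕ) = (x : ℕ) / 2 then bitc (x : ℕ) else BB.star,
    fun f => if h : f ∈ Nset q then
      (fun j => if (j : ℕ) = (h.choose : ℕ) / 2 then cobitc (h.choose : ℕ) else BB.star)
    else fun _ => BB.star, ?_, ?_, ?_⟩
  · intro x j
    dsimp only
    split <;> [skip; exact Or.inr (Or.inr rfl)]
    unfold bitc; split
    · exact Or.inl rfl
    · exact Or.inr (Or.inl rfl)
  · intro f hf j
    dsimp only
    rw [dif_pos hf]
    split <;> [skip; exact Or.inr (Or.inr rfl)]
    unfold cobitc; split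
    · exact Or.inr (Or.inl rfl)
    · exact Or.inl rfl
  · intro f hf x
    dsimp only
    rw [dif_pos hf]
    set t := hf.choose with ht
    have hspec : f = fun x => decide (x ≠ t) := hf.choose_spec
    rw [hspec]
    dsimp only
    unfold Tword
    rw [decide_eq_decide]
    exact key q n hqn x t

lemma Tcell_triple : ∀ a1 a2 a3 v1 v2 v3 : BB,
    Tcell a1 v1 = false → Tcell a2 v2 = false → Tcell a3 v3 = false →
    Tcell a2 v1 = true → Tcell a3 v1 = true → Tcell a1 v2 = true →
    Tcell a3 v2 = true → False := by decide

lemma Nset_lower (q n : ℕ) (h : Implementable Bdot Bdot n q (Nset q)) :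
    q ≤ 2 * n := by
  classical
  obtain ⟨u, θ, -, -, h3⟩ := h
  set F : Fin q → Fin q → Bool := fun t x => decide (x ≠ t) with hF
  have hval : ∀ t x : Fin q, decide (x ≠ t) = Tword (u x) (θ (F t)) :=
    fun t x => h3 (F t) ⟨t, rfl⟩ x
  have hfail : ∀ t : Fin q, ∃ j, Tcell (u t j) (θ (F t) j) = false := by
    intro t
    have h0 : Tword (u t) (θ (F t)) = false := by
      rw [← hval t t]; simp
    simp only [Tword, decide_eq_false_iff_not, not_forall] at h0
    obtain ⟨j, hj⟩ := h0
    exact ⟨j, by simpa using hj⟩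
  have hok : ∀ t x : Fin q, x ≠ t → ∀ j, Tcell (u x j) (θ (F t) j) = true := by
    intro t x hxt j
    have h0 : Tword (u x) (θ (F t)) = true := by
      rw [← hval t x]; simp [hxt]
    simp only [Tword, decide_eq_true_eq] at h0
    exact h0 j
  set g : Fin q → Fin n := fun t => (hfail t).choose with hg
  have hgf : ∀ t, Tcell (u t (g t)) (θ (F t) (g t)) = false :=
    fun t => (hfail t).choose_spec
  have hfib : ∀ j : Fin n, (Finset.univ.filter (fun t => g t = j)).card ≤ 2 := by
    intro j
    by_contra h2
    push_neg at h2
    rw [Finset.two_lt_card_iff] at h2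
    obtain ⟨t1, t2, t3, h1m, h2m, h3m, h12, h13, h23⟩ := h2
    simp only [Finset.mem_filter, Finset.mem_univ, true_and] at h1m h2m h3m
    exact Tcell_triple (u t1 j) (u t2 j) (u t3 j)
      (θ (F t1) j) (θ (F t2) j) (θ (F t3) j)
      (h1m ▸ hgf t1) (h2m ▸ hgf t2) (h3m ▸ hgf t3)
      (hok t1 t2 (Ne.symm h12) j) (hok t1 t3 (Ne.symm h13) j)
      (hok t2 t1 h12 j) (hok t2 t3 (Ne.symm h23) j)
  have hcard : (Finset.univ : Finset (Fin q)).card =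
      ∑ j : Fin n, (Finset.univ.filter (fun t => g t = j)).card :=
    Finset.card_eq_sum_card_fiberwise (fun t _ => Finset.mem_univ (g t))
  calc q = (Finset.univ : Finset (Fin q)).card := by simp
    _ = ∑ j : Fin n, (Finset.univ.filter (fun t => g t = j)).card := hcard
    _ ≤ ∑ _j : Fin n, 2 := Finset.sum_le_sum fun j _ => hfib j
    _ = 2 * n := by simp [mul_comm]

lemma Bstar_subset_Bdot : Bstar ⊆ Bdot := fun a _ => Set.mem_univ a

theorem Nset_implementable_starStar_starReject_rejectReject (q n : ℕ)
    (hq : 2 ≤ q) (hn : 1 ≤ n) :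
    (Implementable Bstar Bstar n q (Nset q) ↔ q ≤ 2 * n) ∧
    (Implementable Bstar Bdot n q (Nset q) ↔ q ≤ 2 * n) ∧
    (Implementable Bdot Bdot n q (Nset q) ↔ q ≤ 2 * n) := by
  refine ⟨⟨fun h => ?_, fun h => ?_⟩, ⟨fun h => ?_, fun h => ?_⟩, ⟨fun h => ?_, fun h => ?_⟩⟩
  · exact Nset_lower q n (h.mono Bstar_subset_Bdot Bstar_subset_Bdot)
  · exact Nset_upper q n h
  · exact Nset_lower q n (h.mono Bstar_subset_Bdot (fun _ _ => trivial))
  · exact (Nset_upper q n h).mono (fun _ h => h) Bstar_subset_Bdot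
  · exact Nset_lower q n h
  · exact (Nset_upper q n h).mono Bstar_subset_Bdot Bstar_subset_Bdot
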